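/- Let λ > 0, l ∈ ℝ, 0 < ε < ∞, and f : (0,ε) → (0,∞) a continuous function. Suppose a, b : (0,ε) → ℝ are differentiable, satisfy a'(x) = l·e^{2λx}·f(x)·b(x) and b'(x) = -l·e^{-2λx}·f(x)·a(x) for all x ∈ (0,ε), and a(x) → 0 and b(x) → 0 as x → 0⁺. Then a(x) = 0 and b(x) = 0 for all x ∈ (0,ε). (The proof observes that F(x) := e^{-4λx}·a(x)² + b(x)² satisfies F ≥ 0, F(0⁺) = 0 and F'(x) = -4λ·e^{-4λx}·a(x)² ≤ 0, hence F ≡ 0.) -/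

import Mathlib

open MeasureTheory Set Filter

/-- If `λ > 0`, `l` real, `0 < ε < ∞`, `f : (0,ε) → (0,∞)` continuous, and `a, b` solve
`a' = l e^{2λx} f b`, `b' = -l e^{-2λx} f a` on `(0,ε)` with `a(x) → 0` and `b(x) → 0`
as `x → 0⁺`, then `a ≡ 0` and `b ≡ 0` on `(0,ε)`.
(Proof: `F(x) := e^{-4λx} a² + b²` satisfies `F ≥ 0`, `F(0⁺) = 0`, `F' ≤ 0`.) -/
theorem transformed_system_vanishes_of_limit_zero
    (lam l ε : ℝ) (hlam : 0 < lam) (hε : 0 < ε)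
    (f : ℝ → ℝ) (hf_cont : ContinuousOn f (Set.Ioo 0 ε))
    (hf_pos : ∀ x ∈ Set.Ioo 0 ε, 0 < f x)
    (a b : ℝ → ℝ)
    (ha : ∀ x ∈ Set.Ioo 0 ε,
      HasDerivAt a (l * Real.exp (2 * lam * x) * f x * b x) x)
    (hb : ∀ x ∈ Set.Ioo 0 ε,
      HasDerivAt b (-(l * Real.exp (-(2 * lam * x)) * f x * a x)) x)
    (ha0 : Filter.Tendsto a (nhdsWithin 0 (Set.Ioi 0)) (nhds 0))
    (hb0 : Filter.Tendsto b (nhdsWithin 0 (Set.Ioi 0)) (nhds 0)) :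
    ∀ x ∈ Set.Ioo 0 ε, a x = 0 ∧ b x = 0 := by
  set F : ℝ → ℝ := fun x => Real.exp (-(4 * lam * x)) * (a x) ^ 2 + (b x) ^ 2 with hF_def
  have hF : ∀ x ∈ Set.Ioo 0 ε,
      HasDerivAt F (-(4 * lam) * Real.exp (-(4 * lam * x)) * (a x) ^ 2) x := by
    intro x hx
    have hax := ha x hx
    have hbx := hb x hx
    have hexp : HasDerivAt (fun x : ℝ => Real.exp (-(4 * lam * x)))
        (-(4 * lam) * Real.exp (-(4 * lam * x))) x := by
      have h1 : HasDerivAt (fun x : ℝ => -(4 * lam * x)) (-(4 * lam)) x := by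
        simpa [Pi.neg_def] using ((hasDerivAt_id x).const_mul (4 * lam)).neg
      simpa [mul_comm] using h1.exp
    have ha2 : HasDerivAt (fun x => (a x) ^ 2)
        (2 * a x * (l * Real.exp (2 * lam * x) * f x * b x)) x := by
      simpa [mul_comm, mul_assoc, Pi.pow_def] using hax.pow 2
    have hb2 : HasDerivAt (fun x => (b x) ^ 2)
        (2 * b x * (-(l * Real.exp (-(2 * lam * x)) * f x * a x))) x := by
      simpa [mul_comm, mul_assoc, Pi.pow_def] using hbx.pow 2
    have : HasDerivAt F _ x := (hexp.mul ha2).add hb2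
    convert this using 1
    have hkey : Real.exp (-(4 * lam * x)) * Real.exp (2 * lam * x)
        = Real.exp (-(2 * lam * x)) := by
      rw [← Real.exp_add]; ring_nf
    linear_combination (-(2 * a x * l * f x * b x)) * hkey
  have hF0 : Filter.Tendsto F (nhdsWithin 0 (Set.Ioi 0)) (nhds 0) := by
    have hexp : Filter.Tendsto (fun x : ℝ => Real.exp (-(4 * lam * x)))
        (nhdsWithin 0 (Set.Ioi 0)) (nhds 1) := by
      have : Continuous (fun x : ℝ => Real.exp (-(4 * lam * x))) := by continuity
      have := this.tendsto 0
      simpa using this.mono_left nhdsWithin_le_nhds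
    have h1 : Filter.Tendsto (fun x => Real.exp (-(4 * lam * x)) * (a x) ^ 2)
        (nhdsWithin 0 (Set.Ioi 0)) (nhds (1 * 0 ^ 2)) := hexp.mul (ha0.pow 2)
    have h2 : Filter.Tendsto (fun x => (b x) ^ 2)
        (nhdsWithin 0 (Set.Ioi 0)) (nhds (0 ^ 2)) := hb0.pow 2
    simpa using h1.add h2
  intro x hx
  -- F is antitone on each [y, x] ⊆ (0, ε)
  have hmono : ∀ y ∈ Set.Ioo 0 x, F x ≤ F y := by
    intro y hy
    have hsub : Set.Icc y x ⊆ Set.Ioo 0 ε := fun z hz =>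
      ⟨lt_of_lt_of_le hy.1 hz.1, lt_of_le_of_lt hz.2 hx.2⟩
    have hcont : ContinuousOn F (Set.Icc y x) := fun z hz =>
      ((hF z (hsub hz)).continuousAt).continuousWithinAt
    have hderiv : ∀ z ∈ interior (Set.Icc y x), deriv F z ≤ 0 := by
      intro z hz
      rw [interior_Icc] at hz
      have hz' : z ∈ Set.Ioo 0 ε := hsub ⟨le_of_lt hz.1, le_of_lt hz.2⟩
      rw [(hF z hz').deriv]
      have : 0 ≤ Real.exp (-(4 * lam * z)) * (a z) ^ 2 := by positivity
      nlinarith [hlam]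
    have hdiff : DifferentiableOn ℝ F (interior (Set.Icc y x)) := by
      intro z hz
      rw [interior_Icc] at hz
      exact ((hF z (hsub ⟨le_of_lt hz.1, le_of_lt hz.2⟩)).differentiableAt).differentiableWithinAt
    have := antitoneOn_of_deriv_nonpos (convex_Icc y x) hcont hdiff hderiv
    exact this ⟨le_refl y, le_of_lt hy.2⟩ ⟨le_of_lt hy.2, le_refl x⟩ (le_of_lt hy.2)
  have hle : F x ≤ 0 := by
    have hev : ∀ᶠ y in nhdsWithin 0 (Set.Ioi 0), F x ≤ F y := by
      filter_upwards [Ioo_mem_nhdsGT_of_mem ⟨le_refl 0, hx.1⟩] with y hy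
      exact hmono y hy
    exact ge_of_tendsto hF0 hev
  have h1 : 0 ≤ Real.exp (-(4 * lam * x)) * (a x) ^ 2 := by positivity
  have h2 : 0 ≤ (b x) ^ 2 := by positivity
  have hFx : Real.exp (-(4 * lam * x)) * (a x) ^ 2 + (b x) ^ 2 ≤ 0 := hle
  have hepos : 0 < Real.exp (-(4 * lam * x)) := Real.exp_pos _
  have ha2z : (a x) ^ 2 = 0 := by nlinarith
  have hb2z : (b x) ^ 2 = 0 := by nlinarith
  exact ⟨pow_eq_zero_iff (two_ne_zero) |>.mp ha2z, pow_eq_zero_iff (two_ne_zero) |>.mp hb2z⟩
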